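/- arXiv:2402.10412 — 5 statements merged into one kernel-verified Lean document; each statement's English description precedes it below -/
import Mathlib

section
/- Let P and Q be probability measures on a measurable space Ω with P ≪ Q and Radon–Nikodym derivative ρ = dP/dQ. Let f : ℝ → ℝ be convex with f(1) = 0, let S ⊆ ℝ, and let f* : ℝ → ℝ satisfy Fenchel–Young domination for f on S. Then for every measurable function g : Ω → ℝ taking values in S such that g is P-integrable, f* ∘ g is Q-integrable, and f ∘ ρ is Q-integrable, one has ∫ g dP − ∫ f*(g) dQ ≤ ∫ f(ρ) dQ = D_f(P‖Q). -/
open MeasureTheory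

/-- Variational lower bound on the f-divergence (Eq. (3) of the paper):
for `P ≪ Q` with Radon–Nikodym derivative `ρ`, a convex `f` with `f 1 = 0`, and `f*`
satisfying Fenchel–Young domination for `f` on `S`, every `S`-valued measurable `g`
satisfies `∫ g dP − ∫ f*(g) dQ ≤ ∫ f(ρ) dQ = D_f(P‖Q)`. -/
theorem fdiv_variational_lower_bound
    {Ω : Type*} [MeasurableSpace Ω]
    (P Q : Measure Ω) [IsProbabilityMeasure P] [IsProbabilityMeasure Q]
    (hPQ : P ≪ Q)
    (ρ : Ω → ℝ) (hρ : ρ = fun ω => (P.rnDeriv Q ω).toReal)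
    (f : ℝ → ℝ) (hf_conv : ConvexOn ℝ Set.univ f) (hf1 : f 1 = 0)
    (S : Set ℝ) (fstar : ℝ → ℝ)
    (hFY : ∀ u ∈ S, ∀ v : ℝ, u * v - f v ≤ fstar u)
    (g : Ω → ℝ) (hg_meas : Measurable g) (hgS : ∀ ω, g ω ∈ S)
    (hg_int : Integrable g P)
    (hfg_int : Integrable (fun ω => fstar (g ω)) Q)
    (hfρ_int : Integrable (fun ω => f (ρ ω)) Q) :
    (∫ ω, g ω ∂P) - (∫ ω, fstar (g ω) ∂Q) ≤ ∫ ω, f (ρ ω) ∂Q := by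
  have h1 : ∫ ω, g ω ∂P = ∫ ω, ρ ω * g ω ∂Q := by
    rw [hρ]
    simp_rw [← smul_eq_mul]
    exact (integral_rnDeriv_smul hPQ).symm
  have hint : Integrable (fun ω => ρ ω * g ω) Q := by
    rw [hρ]; simp_rw [← smul_eq_mul]
    exact (integrable_rnDeriv_smul_iff hPQ).mpr hg_int
  rw [h1, sub_le_iff_le_add, ← integral_add hfρ_int hfg_int]
  refine integral_mono hint (hfρ_int.add hfg_int) fun ω => ?_
  have := hFY (g ω) (hgS ω) (ρ ω)
  simp only [Pi.add_apply]
  linarith [this]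
end

section
/- Let P and Q be probability measures on a measurable space Ω with P ≪ Q and Radon–Nikodym derivative ρ = dP/dQ satisfying ρ(ω) > 0 for Q-almost every ω. Let f : ℝ → ℝ be convex with f(1) = 0 and differentiable on (0, ∞), and let f* : ℝ → ℝ satisfy the Fenchel–Young equality f*(f'(t)) = t·f'(t) − f(t) for every t > 0. Set g = f' ∘ ρ. If g is P-integrable, f* ∘ g is Q-integrable, and f ∘ ρ is Q-integrable, then ∫ g dP − ∫ f*(g) dQ = ∫ f(ρ) dQ = D_f(P‖Q). -/
open MeasureTheory

/-- The supremum in the variational representation of the f-divergence is attained at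
the witness `g* = f' ∘ (dP/dQ)`: under the Fenchel–Young equality
`f*(f'(t)) = t·f'(t) − f(t)` for `t > 0`, one has
`∫ g* dP − ∫ f*(g*) dQ = ∫ f(ρ) dQ = D_f(P‖Q)`. -/
theorem fdiv_variational_attained
    {Ω : Type*} [MeasurableSpace Ω]
    (P Q : Measure Ω) [IsProbabilityMeasure P] [IsProbabilityMeasure Q]
    (hPQ : P ≪ Q)
    (ρ : Ω → ℝ) (hρ : ρ = fun ω => (P.rnDeriv Q ω).toReal)
    (hρ_pos : ∀ᵐ ω ∂Q, 0 < ρ ω)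
    (f : ℝ → ℝ) (hf_conv : ConvexOn ℝ Set.univ f) (hf1 : f 1 = 0)
    (hf_diff : DifferentiableOn ℝ f (Set.Ioi 0))
    (fstar : ℝ → ℝ)
    (hFYeq : ∀ t : ℝ, 0 < t → fstar (deriv f t) = t * deriv f t - f t)
    (g : Ω → ℝ) (hg : g = fun ω => deriv f (ρ ω))
    (hg_int : Integrable g P)
    (hfg_int : Integrable (fun ω => fstar (g ω)) Q)
    (hfρ_int : Integrable (fun ω => f (ρ ω)) Q) :
    (∫ ω, g ω ∂P) - (∫ ω, fstar (g ω) ∂Q) = ∫ ω, f (ρ ω) ∂Q := by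
  have h1 : (∫ ω, g ω ∂P) = ∫ ω, ρ ω * g ω ∂Q := by
    rw [hρ]
    simp_rw [← smul_eq_mul]
    exact (MeasureTheory.integral_rnDeriv_smul hPQ).symm
  have h2 : ∀ᵐ ω ∂Q, fstar (g ω) = ρ ω * g ω - f (ρ ω) := by
    filter_upwards [hρ_pos] with ω hω
    rw [hg]
    exact hFYeq (ρ ω) hω
  rw [h1, integral_congr_ae h2, integral_sub _ hfρ_int, sub_sub_cancel]
  have h3 := ((integrable_congr h2).mp hfg_int).add hfρ_int
  have : ((fun x => ρ x * g x - f (ρ x)) + fun ω => f (ρ ω)) = fun a => ρ a * g a := by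
    funext a; simp
  rwa [this] at h3
end

section
/- (Theorem 1) Let (Ω, μ) be a probability space, let 𝒜 be a standard Borel space (the answer space), and let A, A★, h_1, …, h_N : Ω → 𝒜 be random variables (the evaluated LLM's answers, the optimal LLM's answers, and the answers of N reference LLMs). Assume: (constant expertise) λ_1, …, λ_N ≥ 0 with ∑_{i=1}^N λ_i = 1; (conditional independence) for each i, A and h_i are conditionally independent given A★. Let f : ℝ → ℝ be convex with f(1) = 0, let S ⊆ ℝ, let f* : ℝ → ℝ satisfy Fenchel–Young domination for f on S, and let g★ : 𝒜 × 𝒜 → ℝ be measurable with values in S. For each i, set P_i = law(A, h_i), Q_i = law(A) ⊗ law(h_i), P★_i = law(A★, h_i), Q★_i = law(A★) ⊗ law(h_i), and assume: P_i ≪ Q_i and P★_i ≪ Q★_i with f composed with the respective densities integrable; g★ is integrable with respect to P_i and P★_i and f* ∘ g★ is integrable with respect to Q_i and Q★_i; and g★ attains the variational representation for the optimal LLM, i.e. ∫ g★ dP★_i − ∫ f*(g★) dQ★_i = D_f(P★_i ‖ Q★_i). Then ∑_{i=1}^N λ_i ( ∫ g★ dP★_i − ∫ f*(g★) dQ★_i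 ) ≥ ∑_{i=1}^N λ_i ( ∫ g★ dP_i − ∫ f*(g★) dQ_i ); that is, E_X[FEWL(A★(X), {h_i(X)}_{i∈[N]})] ≥ E_X[FEWL(A(X), {h_i(X)}_{i∈[N]})]. -/
open MeasureTheory ProbabilityTheory
open scoped ENNReal

set_option linter.unusedSectionVars false
set_option maxHeartbeats 1000000


lemma myCompProd_withDensity {α β : Type*} [MeasurableSpace α] [MeasurableSpace β]
    (ν : Measure α) [SFinite ν] (k : Kernel α β) [IsSFiniteKernel k]
    {ρ : α → ℝ≥0∞} (hρ : Measurable ρ) :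
    (ν.withDensity ρ) ⊗ₘ k = (ν ⊗ₘ k).withDensity (fun p => ρ p.1) := by
  ext s hs
  have hmeas : Measurable fun p : α × β => ρ p.1 := hρ.comp measurable_fst
  rw [Measure.compProd_apply hs, withDensity_apply _ hs,
    ← lintegral_indicator hs, Measure.lintegral_compProd (hmeas.indicator hs)]
  rw [lintegral_withDensity_eq_lintegral_mul _ hρ
    (Kernel.measurable_kernel_prodMk_left hs)]
  congr 1
  ext a
  have : ∀ b, s.indicator (fun p => ρ p.1) (a, b)
      = (Prod.mk a ⁻¹' s).indicator (fun _ => ρ a) b := by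
    intro b
    by_cases hb : (a, b) ∈ s <;> simp [Set.indicator, hb]
  simp_rw [this]
  rw [lintegral_indicator (measurable_prodMk_left hs), setLIntegral_const]
  rfl

section aux
variable {Ω 𝒜 : Type*} [MeasurableSpace Ω] [StandardBorelSpace Ω] [Nonempty Ω]
    [MeasurableSpace 𝒜] [StandardBorelSpace 𝒜] [Nonempty 𝒜]

lemma ci_rect (μ : Measure Ω) [IsProbabilityMeasure μ]
    (A Astar B : Ω → 𝒜) (hA : Measurable A) (hAstar : Measurable Astar) (hB : Measurable B)
    (hCI : CondIndepFun (MeasurableSpace.comap Astar inferInstance) hAstar.comap_le A B μ)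
    {s t u : Set 𝒜} (hs : MeasurableSet s) (ht : MeasurableSet t) (hu : MeasurableSet u) :
    (μ.map (fun ω => ((Astar ω, B ω), A ω))) ((s ×ˢ t) ×ˢ u) =
      ∫⁻ p in s ×ˢ t, condDistrib A Astar μ p.1 u ∂(μ.map (fun ω => (Astar ω, B ω))) := by
  have hm' : MeasurableSpace.comap Astar inferInstance ≤ _ := hAstar.comap_le
  set κ : Kernel 𝒜 𝒜 := condDistrib A Astar μ with hκdef
  have hpair : Measurable (fun ω => (Astar ω, B ω)) := hAstar.prodMk hB
  have htrip : Measurable (fun ω => ((Astar ω, B ω), A ω)) := hpair.prodMk hA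
  have hκu : Measurable fun p : 𝒜 × 𝒜 => κ p.1 u := (Kernel.measurable_coe κ hu).comp measurable_fst
  rw [Measure.map_apply htrip (((hs.prod ht)).prod hu),
    setLIntegral_map (hs.prod ht) hκu hpair]
  have hpre : (fun ω => ((Astar ω, B ω), A ω)) ⁻¹' ((s ×ˢ t) ×ˢ u)
      = (Astar ⁻¹' s ∩ B ⁻¹' t) ∩ A ⁻¹' u := by
    rw [Set.mk_preimage_prod, Set.mk_preimage_prod]
  have hpre2 : (fun ω => (Astar ω, B ω)) ⁻¹' (s ×ˢ t) = Astar ⁻¹' s ∩ B ⁻¹' t :=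
    Set.mk_preimage_prod _ _
  rw [hpre, hpre2]
  set T : Set Ω := Astar ⁻¹' s ∩ B ⁻¹' t with hTdef
  have hTmeas : MeasurableSet T := (hAstar hs).inter (hB ht)
  have hSm' : MeasurableSet[MeasurableSpace.comap Astar inferInstance] (Astar ⁻¹' s) :=
    ⟨s, hs, rfl⟩
  have hSmeas : MeasurableSet (Astar ⁻¹' s) := hAstar hs
  set EA : Ω → ℝ := μ⟦A ⁻¹' u | MeasurableSpace.comap Astar inferInstance⟧ with hEAdef
  set EB : Ω → ℝ := μ⟦B ⁻¹' t | MeasurableSpace.comap Astar inferInstance⟧ with hEBdef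
  have hfin1 : μ ((Astar ⁻¹' s ∩ B ⁻¹' t) ∩ A ⁻¹' u) ≠ ∞ := measure_ne_top _ _
  have hfin2 : (∫⁻ ω in T, κ (Astar ω) u ∂μ) ≠ ∞ := by
    have hb : (∫⁻ ω in T, κ (Astar ω) u ∂μ) ≤ μ T := by
      calc ∫⁻ ω in T, κ (Astar ω) u ∂μ ≤ ∫⁻ _ω in T, 1 ∂μ :=
            lintegral_mono fun ω => prob_le_one
        _ = μ T := by rw [lintegral_one, Measure.restrict_apply_univ]
    exact ne_of_lt (lt_of_le_of_lt hb (measure_lt_top μ T))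
  rw [← ENNReal.toReal_eq_toReal_iff' hfin1 hfin2]
  have lhs1 : (μ ((Astar ⁻¹' s ∩ B ⁻¹' t) ∩ A ⁻¹' u)).toReal
      = ∫ ω in Astar ⁻¹' s, ((B ⁻¹' t ∩ A ⁻¹' u).indicator (fun _ => (1:ℝ))) ω ∂μ := by
    rw [setIntegral_indicator ((hB ht).inter (hA hu)), setIntegral_const, smul_eq_mul, mul_one,
      Set.inter_assoc]
    rfl
  have lhs2 : ∫ ω in Astar ⁻¹' s, ((B ⁻¹' t ∩ A ⁻¹' u).indicator (fun _ => (1:ℝ))) ω ∂μ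
      = ∫ ω in Astar ⁻¹' s,
          (μ⟦B ⁻¹' t ∩ A ⁻¹' u | MeasurableSpace.comap Astar inferInstance⟧) ω ∂μ :=
    (setIntegral_condExp hm' ((integrable_const (1:ℝ)).indicator ((hB ht).inter (hA hu))) hSm').symm
  have hCI' := (condIndepFun_iff_condExp_inter_preimage_eq_mul hA hB).mp hCI u t hu ht
  have lhs3 : (μ⟦B ⁻¹' t ∩ A ⁻¹' u | MeasurableSpace.comap Astar inferInstance⟧)
      =ᵐ[μ] fun ω => EA ω * EB ω := by
    rw [Set.inter_comm]
    exact hCI'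
  have hmm : Measurable fun ω => κ (Astar ω) u := (Kernel.measurable_coe κ hu).comp hAstar
  have rhs1 : (∫⁻ ω in T, κ (Astar ω) u ∂μ).toReal = ∫ ω in T, (κ (Astar ω) u).toReal ∂μ :=
    (integral_toReal hmm.aemeasurable.restrict
      (ae_of_all _ fun ω => measure_lt_top _ _)).symm
  have rhs2 : (fun ω => (κ (Astar ω) u).toReal) =ᵐ[μ] EA :=
    condDistrib_ae_eq_condExp hAstar hA hu
  have hEBint : Integrable ((B ⁻¹' t).indicator (fun _ => (1:ℝ))) μ :=
    (integrable_const (1:ℝ)).indicator (hB ht)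
  have hprodint : Integrable (EA * ((B ⁻¹' t).indicator (fun _ => (1:ℝ)))) μ := by
    have hbd : ∃ C, ∀ ω, ‖(B ⁻¹' t).indicator (fun _ => (1:ℝ)) ω‖ ≤ C := by
      refine ⟨1, fun ω => ?_⟩
      by_cases hω : ω ∈ B ⁻¹' t <;> simp [Set.indicator, hω]
    have h1 := (integrable_condExp (m := MeasurableSpace.comap Astar inferInstance)
      (f := (A ⁻¹' u).indicator (fun _ => (1:ℝ))) (μ := μ)).bdd_mul
      ((stronglyMeasurable_const.indicator (hB ht)).aestronglyMeasurable) (ae_of_all _ hbd.choose_spec)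
    have hcomm : EA * ((B ⁻¹' t).indicator (fun _ => (1:ℝ)))
        = fun ω => (B ⁻¹' t).indicator (fun _ => (1:ℝ)) ω * EA ω := by
      funext ω; simp [mul_comm]
    rw [hcomm]
    exact h1
  have rhs3 : ∫ ω in T, EA ω ∂μ
      = ∫ ω in Astar ⁻¹' s, (EA * ((B ⁻¹' t).indicator (fun _ => (1:ℝ)))) ω ∂μ := by
    rw [show (EA * ((B ⁻¹' t).indicator (fun _ => (1:ℝ)))) = (B ⁻¹' t).indicator EA by
      funext ω; by_cases hω : ω ∈ B ⁻¹' t <;> simp [Set.indicator, hω]]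
    rw [setIntegral_indicator (hB ht)]
  have rhs4 : ∫ ω in Astar ⁻¹' s, (EA * ((B ⁻¹' t).indicator (fun _ => (1:ℝ)))) ω ∂μ
      = ∫ ω in Astar ⁻¹' s,
        (μ[EA * ((B ⁻¹' t).indicator (fun _ => (1:ℝ))) |
          MeasurableSpace.comap Astar inferInstance]) ω ∂μ :=
    (setIntegral_condExp hm' hprodint hSm').symm
  have rhs5 : (μ[EA * ((B ⁻¹' t).indicator (fun _ => (1:ℝ))) |
        MeasurableSpace.comap Astar inferInstance]) =ᵐ[μ] EA * EB :=
    condExp_mul_of_stronglyMeasurable_left stronglyMeasurable_condExp hprodint hEBint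
  calc (μ ((Astar ⁻¹' s ∩ B ⁻¹' t) ∩ A ⁻¹' u)).toReal
      = ∫ ω in Astar ⁻¹' s,
          (μ⟦B ⁻¹' t ∩ A ⁻¹' u | MeasurableSpace.comap Astar inferInstance⟧) ω ∂μ :=
        lhs1.trans lhs2
    _ = ∫ ω in Astar ⁻¹' s, EA ω * EB ω ∂μ :=
        setIntegral_congr_ae hSmeas (lhs3.mono fun ω hω _ => hω)
    _ = ∫ ω in Astar ⁻¹' s, (EA * EB) ω ∂μ := rfl
    _ = ∫ ω in Astar ⁻¹' s,
        (μ[EA * ((B ⁻¹' t).indicator (fun _ => (1:ℝ))) |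
          MeasurableSpace.comap Astar inferInstance]) ω ∂μ :=
        (setIntegral_congr_ae hSmeas (rhs5.mono fun ω hω _ => hω)).symm
    _ = ∫ ω in T, EA ω ∂μ := (rhs4.symm.trans rhs3.symm)
    _ = ∫ ω in T, (κ (Astar ω) u).toReal ∂μ :=
        (setIntegral_congr_ae hTmeas (rhs2.mono fun ω hω _ => hω)).symm
    _ = (∫⁻ ω in T, κ (Astar ω) u ∂μ).toReal := rhs1.symm

lemma ci_map_eq_compProd (μ : Measure Ω) [IsProbabilityMeasure μ]
    (A Astar B : Ω → 𝒜) (hA : Measurable A) (hAstar : Measurable Astar) (hB : Measurable B)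
    (hCI : CondIndepFun (MeasurableSpace.comap Astar inferInstance) hAstar.comap_le A B μ) :
    μ.map (fun ω => ((Astar ω, B ω), A ω)) =
      (μ.map (fun ω => (Astar ω, B ω))) ⊗ₘ
        ((condDistrib A Astar μ).comap Prod.fst measurable_fst) := by
  set κ : Kernel 𝒜 𝒜 := condDistrib A Astar μ with hκdef
  have hpair : Measurable (fun ω => (Astar ω, B ω)) := hAstar.prodMk hB
  have htrip : Measurable (fun ω => ((Astar ω, B ω), A ω)) := hpair.prodMk hA
  have hPL : IsProbabilityMeasure (μ.map (fun ω => ((Astar ω, B ω), A ω))) :=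
    Measure.isProbabilityMeasure_map htrip.aemeasurable
  have hPp : IsProbabilityMeasure (μ.map (fun ω => (Astar ω, B ω))) :=
    Measure.isProbabilityMeasure_map hpair.aemeasurable
  refine ext_of_generate_finite _ generateFrom_prod.symm isPiSystem_prod ?_ ?_
  · rintro _ ⟨v, hv, u, hu, rfl⟩
    simp only [Set.mem_setOf_eq] at hv hu
    rw [Measure.compProd_apply_prod hv hu]
    have hκ'eq : ∀ p : 𝒜 × 𝒜,
        ((κ.comap Prod.fst measurable_fst) : Kernel (𝒜 × 𝒜) 𝒜) p u = κ p.1 u := fun p =>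
      by rw [Kernel.comap_apply]
    simp_rw [hκ'eq]
    set m1 : Measure (𝒜 × 𝒜) :=
      ((μ.map (fun ω => ((Astar ω, B ω), A ω))).restrict (Prod.snd ⁻¹' u)).map Prod.fst with hm1
    set m2 : Measure (𝒜 × 𝒜) :=
      (μ.map (fun ω => (Astar ω, B ω))).withDensity (fun p => κ p.1 u) with hm2
    have hκu : Measurable fun p : 𝒜 × 𝒜 => κ p.1 u :=
      (Kernel.measurable_coe κ hu).comp measurable_fst
    have hm1v : ∀ w : Set (𝒜 × 𝒜), MeasurableSet w →
        m1 w = (μ.map (fun ω => ((Astar ω, B ω), A ω))) (w ×ˢ u) := by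
      intro w hw
      rw [hm1, Measure.map_apply measurable_fst hw,
        Measure.restrict_apply (measurable_fst hw), ← Set.prod_eq]
    have hm2v : ∀ w : Set (𝒜 × 𝒜), MeasurableSet w →
        m2 w = ∫⁻ p in w, κ p.1 u ∂(μ.map (fun ω => (Astar ω, B ω))) := by
      intro w hw
      rw [hm2, withDensity_apply _ hw]
    have hm1fin : IsFiniteMeasure m1 := by
      constructor
      rw [hm1v _ MeasurableSet.univ]
      exact measure_lt_top _ _
    have hkey : m1 = m2 := by
      refine ext_of_generate_finite _ generateFrom_prod.symm isPiSystem_prod ?_ ?_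
      · rintro _ ⟨s, hs, t, ht, rfl⟩
        simp only [Set.mem_setOf_eq] at hs ht
        rw [hm1v _ (hs.prod ht), hm2v _ (hs.prod ht)]
        exact ci_rect μ A Astar B hA hAstar hB hCI hs ht hu
      · rw [hm1v _ MeasurableSet.univ, hm2v _ MeasurableSet.univ, ← Set.univ_prod_univ]
        exact ci_rect μ A Astar B hA hAstar hB hCI MeasurableSet.univ MeasurableSet.univ hu
    rw [← hm1v v hv, hkey, hm2v v hv]
  · rw [Measure.compProd_apply MeasurableSet.univ]
    simp



/-- Per-index key inequality. -/
lemma fewl_key (μ : Measure Ω) [IsProbabilityMeasure μ]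
    (A Astar B : Ω → 𝒜) (hA : Measurable A) (hAstar : Measurable Astar) (hB : Measurable B)
    (hCI : CondIndepFun (MeasurableSpace.comap Astar inferInstance) hAstar.comap_le A B μ)
    (f : ℝ → ℝ) (S : Set ℝ) (fstar : ℝ → ℝ)
    (hFY : ∀ u ∈ S, ∀ v : ℝ, u * v - f v ≤ fstar u)
    (gstar : 𝒜 × 𝒜 → ℝ) (hgstar_meas : Measurable gstar) (hgstarS : ∀ z, gstar z ∈ S)
    (P Q Pstar Qstar : Measure (𝒜 × 𝒜))
    (hP : P = μ.map (fun ω => (A ω, B ω)))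
    (hQ : Q = (μ.map A).prod (μ.map B))
    (hPstar : Pstar = μ.map (fun ω => (Astar ω, B ω)))
    (hQstar : Qstar = (μ.map Astar).prod (μ.map B))
    (hac_star : Pstar ≪ Qstar)
    (hint_star : Integrable (fun z => f ((Pstar.rnDeriv Qstar z).toReal)) Qstar)
    (hg_int : Integrable gstar P)
    (hfg_int : Integrable (fun z => fstar (gstar z)) Q) :
    (∫ z, gstar z ∂P) - (∫ z, fstar (gstar z) ∂Q) ≤
      ∫ z, f ((Pstar.rnDeriv Qstar z).toReal) ∂Qstar := by
  haveI hPM : IsProbabilityMeasure P := by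
    rw [hP]; exact Measure.isProbabilityMeasure_map (hA.prodMk hB).aemeasurable
  haveI hνA : IsProbabilityMeasure (μ.map A) := Measure.isProbabilityMeasure_map hA.aemeasurable
  haveI hνAs : IsProbabilityMeasure (μ.map Astar) := Measure.isProbabilityMeasure_map hAstar.aemeasurable
  haveI hνB : IsProbabilityMeasure (μ.map B) := Measure.isProbabilityMeasure_map hB.aemeasurable
  haveI hQM : IsProbabilityMeasure Q := by rw [hQ]; infer_instance
  haveI hPsM : IsProbabilityMeasure Pstar := by
    rw [hPstar]; exact Measure.isProbabilityMeasure_map (hAstar.prodMk hB).aemeasurable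
  haveI hQsM : IsProbabilityMeasure Qstar := by rw [hQstar]; infer_instance
  set κ : Kernel 𝒜 𝒜 := condDistrib A Astar μ with hκdef
  set κ' : Kernel (𝒜 × 𝒜) 𝒜 := κ.comap Prod.fst measurable_fst with hκ'def
  set ρ : 𝒜 × 𝒜 → ℝ≥0∞ := Pstar.rnDeriv Qstar with hρdef
  have hρ : Measurable ρ := Measure.measurable_rnDeriv _ _
  set M : Measure ((𝒜 × 𝒜) × 𝒜) := Qstar ⊗ₘ κ' with hMdef
  set φ : (𝒜 × 𝒜) × 𝒜 → 𝒜 × 𝒜 := fun p => (p.2, p.1.2) with hφdef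
  have hφ : Measurable φ := measurable_snd.prodMk (measurable_snd.comp measurable_fst)
  have htrip : Measurable (fun ω => ((Astar ω, B ω), A ω)) := (hAstar.prodMk hB).prodMk hA
  -- F2 + F3: the joint law equals M.withDensity (ρ ∘ fst)
  have F2 : μ.map (fun ω => ((Astar ω, B ω), A ω)) = Pstar ⊗ₘ κ' := by
    rw [hPstar]
    exact ci_map_eq_compProd μ A Astar B hA hAstar hB hCI
  have F3 : Pstar ⊗ₘ κ' = M.withDensity (fun p => ρ p.1) := by
    conv_lhs => rw [← Measure.withDensity_rnDeriv_eq Pstar Qstar hac_star]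
    exact myCompProd_withDensity Qstar κ' hρ
  -- F6 : fst marginal of M is Qstar
  have F6 : M.map Prod.fst = Qstar := by
    rw [show M.map Prod.fst = M.fst from rfl, hMdef, Measure.fst_compProd]
  -- disintegration of (Astar, A)
  have hcp : (μ.map Astar) ⊗ₘ κ = μ.map (fun ω => (Astar ω, A ω)) := by
    rw [hκdef, condDistrib_def, ← Measure.fst_map_prodMk (X := Astar) hA,
      Measure.disintegrate]
  have hκA : ∀ s : Set 𝒜, MeasurableSet s → ∫⁻ a, κ a s ∂(μ.map Astar) = (μ.map A) s := by
    intro s hs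
    calc ∫⁻ a, κ a s ∂(μ.map Astar)
        = ∫⁻ a in Set.univ, κ a s ∂(μ.map Astar) := (setLIntegral_univ _).symm
      _ = ((μ.map Astar) ⊗ₘ κ) (Set.univ ×ˢ s) :=
          (Measure.compProd_apply_prod MeasurableSet.univ hs).symm
      _ = (μ.map (fun ω => (Astar ω, A ω))) (Set.univ ×ˢ s) := by rw [hcp]
      _ = μ (A ⁻¹' s) := by
          rw [Measure.map_apply (hAstar.prodMk hA) (MeasurableSet.univ.prod hs)]
          congr 1
          ext ω; simp
      _ = (μ.map A) s := (Measure.map_apply hA hs).symm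
  -- F4 : φ-marginal of M is Q
  have F4 : M.map φ = Q := by
    rw [hQ]
    refine (Measure.prod_eq fun s t hs ht => ?_).symm
    have hpre : φ ⁻¹' (s ×ˢ t) = (Set.univ ×ˢ t) ×ˢ s := by
      ext p; simp [hφdef, and_comm]
    rw [Measure.map_apply hφ (hs.prod ht), hpre, hMdef,
      Measure.compProd_apply_prod (MeasurableSet.univ.prod ht) hs]
    simp_rw [hκ'def, Kernel.comap_apply]
    rw [hQstar, ← lintegral_indicator (MeasurableSet.univ.prod ht)]
    have hind : ∀ p : 𝒜 × 𝒜, (Set.univ ×ˢ t).indicator (fun p => κ p.1 s) p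
        = (fun a => κ a s) p.1 * t.indicator (1 : 𝒜 → ℝ≥0∞) p.2 := by
      intro p
      by_cases hp : p.2 ∈ t <;> simp [Set.indicator, hp]
    simp_rw [hind]
    rw [lintegral_prod_mul (Kernel.measurable_coe κ hs).aemeasurable
      ((measurable_one.indicator ht)).aemeasurable, lintegral_indicator_one ht,
      hκA s hs]
  -- F5 : φ-marginal of the joint law is P
  have F5 : (μ.map (fun ω => ((Astar ω, B ω), A ω))).map φ = P := by
    rw [hP, Measure.map_map hφ htrip]
    rfl
  -- a.e. finiteness of the density on M
  have hρfin : ∀ᵐ z ∂Qstar, ρ z < ∞ := Measure.rnDeriv_lt_top _ _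
  have hft : ∀ᵐ p ∂M, ρ p.1 < ∞ := by
    rw [← F6] at hρfin
    exact (ae_map_iff measurable_fst.aemeasurable (measurableSet_lt hρ measurable_const)).mp hρfin
  have hρfst : Measurable fun p : (𝒜 × 𝒜) × 𝒜 => ρ p.1 := hρ.comp measurable_fst
  -- integral identities
  have hI1 : ∫ z, gstar z ∂P = ∫ p, gstar (φ p) * (ρ p.1).toReal ∂M := by
    rw [← F5, F2, F3, integral_map hφ.aemeasurable hgstar_meas.aestronglyMeasurable,
      ← withDensity_congr_ae (coe_toNNReal_ae_eq hft),
      integral_withDensity_eq_integral_smul₀ hρfst.ennreal_toNNReal.aemeasurable]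
    refine integral_congr_ae (ae_of_all _ fun p => ?_)
    simp [NNReal.smul_def, ENNReal.toReal, mul_comm]
  have hI2 : ∫ z, fstar (gstar z) ∂Q = ∫ p, fstar (gstar (φ p)) ∂M := by
    rw [← F4, integral_map hφ.aemeasurable
      (by rw [F4]; exact hfg_int.aestronglyMeasurable)]
  have hI3 : ∫ z, f ((ρ z).toReal) ∂Qstar = ∫ p, f ((ρ p.1).toReal) ∂M := by
    rw [← F6, integral_map measurable_fst.aemeasurable
      (by rw [F6]; exact hint_star.aestronglyMeasurable)]
  -- integrability over M
  have J1 : Integrable (fun p => fstar (gstar (φ p))) M := by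
    have h0 := hfg_int
    rw [← F4] at h0
    exact (integrable_map_measure (by rw [F4]; exact hfg_int.aestronglyMeasurable)
      hφ.aemeasurable).mp h0
  have J2 : Integrable (fun p => gstar (φ p) * (ρ p.1).toReal) M := by
    have h0 := hg_int
    rw [← F5] at h0
    have h1 : Integrable (fun p => gstar (φ p)) (μ.map (fun ω => ((Astar ω, B ω), A ω))) :=
      (integrable_map_measure (by rw [F5]; exact hg_int.aestronglyMeasurable)
        hφ.aemeasurable).mp h0
    rw [F2, F3] at h1
    exact (integrable_withDensity_iff hρfst hft).mp h1
  have J3 : Integrable (fun p => f ((ρ p.1).toReal)) M := by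
    have h0 := hint_star
    rw [← F6] at h0
    exact (integrable_map_measure (by rw [F6]; exact hint_star.aestronglyMeasurable)
      measurable_fst.aemeasurable).mp h0
  calc (∫ z, gstar z ∂P) - ∫ z, fstar (gstar z) ∂Q
      = ∫ p, (gstar (φ p) * (ρ p.1).toReal - fstar (gstar (φ p))) ∂M := by
        rw [hI1, hI2, integral_sub J2 J1]
    _ ≤ ∫ p, f ((ρ p.1).toReal) ∂M := by
        refine integral_mono (J2.sub J1) J3 fun p => ?_
        have hfy := hFY (gstar (φ p)) (hgstarS _) ((ρ p.1).toReal)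
        dsimp only
        linarith
    _ = ∫ z, f ((ρ z).toReal) ∂Qstar := hI3.symm


end aux

/-- (Theorem 1) FEWL scores the optimal LLM `A★` at least as high as any LLM `A`, in
expectation, even when only reference-LLM answers (not gold-standard answers) are used:
under constant expertise weights `λ_i`, conditional independence `h_i ⫫ A | A★`,
Fenchel–Young domination of `f*` for `f` on `S`, and attainment of the variational
representation by the witness `g★` for the optimal LLM, one has
`∑ i, λ_i (∫ g★ dP★_i − ∫ f*(g★) dQ★_i) ≥ ∑ i, λ_i (∫ g★ dP_i − ∫ f*(g★) dQ_i)`. -/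
theorem fewl_scores_best_llm_highest
    {Ω 𝒜 : Type*}
    [MeasurableSpace Ω] [StandardBorelSpace Ω]
    [MeasurableSpace 𝒜] [StandardBorelSpace 𝒜]
    (μ : Measure Ω) [IsProbabilityMeasure μ]
    {N : ℕ}
    (A Astar : Ω → 𝒜) (h : Fin N → Ω → 𝒜)
    (hA : Measurable A) (hAstar : Measurable Astar) (hh : ∀ i, Measurable (h i))
    -- constant expertise weights
    (lam : Fin N → ℝ) (hlam_nonneg : ∀ i, 0 ≤ lam i) (hlam_sum : ∑ i, lam i = 1)
    -- conditional independence: A and h i are conditionally independent given Astar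
    (hCI : ∀ i, CondIndepFun (MeasurableSpace.comap Astar inferInstance)
      (hAstar.comap_le) A (h i) μ)
    (f : ℝ → ℝ) (hf_conv : ConvexOn ℝ Set.univ f) (hf1 : f 1 = 0)
    (S : Set ℝ) (fstar : ℝ → ℝ)
    (hFY : ∀ u ∈ S, ∀ v : ℝ, u * v - f v ≤ fstar u)
    (gstar : 𝒜 × 𝒜 → ℝ) (hgstar_meas : Measurable gstar) (hgstarS : ∀ z, gstar z ∈ S)
    (P Q Pstar Qstar : Fin N → Measure (𝒜 × 𝒜))
    (hP : ∀ i, P i = μ.map (fun ω => (A ω, h i ω)))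
    (hQ : ∀ i, Q i = (μ.map A).prod (μ.map (h i)))
    (hPstar : ∀ i, Pstar i = μ.map (fun ω => (Astar ω, h i ω)))
    (hQstar : ∀ i, Qstar i = (μ.map Astar).prod (μ.map (h i)))
    -- absolute continuity with integrable f-densities
    (hac : ∀ i, P i ≪ Q i)
    (hac_star : ∀ i, Pstar i ≪ Qstar i)
    (hint : ∀ i, Integrable (fun z => f (((P i).rnDeriv (Q i) z).toReal)) (Q i))
    (hint_star : ∀ i,
      Integrable (fun z => f (((Pstar i).rnDeriv (Qstar i) z).toReal)) (Qstar i))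
    -- integrability of the witness
    (hg_int : ∀ i, Integrable gstar (P i))
    (hg_int_star : ∀ i, Integrable gstar (Pstar i))
    (hfg_int : ∀ i, Integrable (fun z => fstar (gstar z)) (Q i))
    (hfg_int_star : ∀ i, Integrable (fun z => fstar (gstar z)) (Qstar i))
    -- g★ attains the variational representation for the optimal LLM
    (hattain : ∀ i,
      (∫ z, gstar z ∂(Pstar i)) - (∫ z, fstar (gstar z) ∂(Qstar i)) =
        ∫ z, f (((Pstar i).rnDeriv (Qstar i) z).toReal) ∂(Qstar i)) :
    ∑ i, lam i * ((∫ z, gstar z ∂(Pstar i)) - (∫ z, fstar (gstar z) ∂(Qstar i))) ≥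
      ∑ i, lam i * ((∫ z, gstar z ∂(P i)) - (∫ z, fstar (gstar z) ∂(Q i))) := by
  have hΩ : Nonempty Ω := by
    by_contra hc
    rw [not_nonempty_iff] at hc
    have h1 : μ Set.univ = 1 := measure_univ
    rw [Set.univ_eq_empty_iff.mpr hc] at h1
    simp at h1
  have h𝒜 : Nonempty 𝒜 := Nonempty.map A hΩ
  rw [ge_iff_le]
  refine Finset.sum_le_sum fun i _ => ?_
  refine mul_le_mul_of_nonneg_left ?_ (hlam_nonneg i)
  rw [hattain i]
  exact fewl_key μ A Astar (h i) hA hAstar (hh i) (hCI i) f S fstar hFY gstar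
    hgstar_meas hgstarS (P i) (Q i) (Pstar i) (Qstar i) (hP i) (hQ i) (hPstar i)
    (hQstar i) (hac_star i) (hint_star i) (hg_int i) (hfg_int i)
end

section
/- Let f(v) = v·log v − (v + 1)·log((v + 1)/2) for v > 0 (the Jensen–Shannon generator). For every real u with u < log 2, the supremum over v > 0 of u·v − f(v) equals −log(2 − e^u). That is, the Fenchel conjugate of the Jensen–Shannon generator is f*(u) = −log(2 − e^u) on (−∞, log 2). -/
/-- The Fenchel conjugate of the Jensen–Shannon generator
`f(v) = v·log v − (v + 1)·log((v + 1)/2)` is `f*(u) = −log(2 − e^u)` on `(−∞, log 2)`: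
for every `u < log 2`, the supremum over `v > 0` of `u·v − f(v)` equals
`−log(2 − exp u)`. -/
theorem js_fenchel_conjugate (u : ℝ) (hu : u < Real.log 2) :
    IsLUB
      ((fun v : ℝ => u * v - (v * Real.log v - (v + 1) * Real.log ((v + 1) / 2))) ''
        Set.Ioi 0)
      (-Real.log (2 - Real.exp u)) := by
  have hea : Real.exp u < 2 := by
    calc Real.exp u < Real.exp (Real.log 2) := Real.exp_lt_exp.mpr hu
    _ = 2 := Real.exp_log two_pos
  set a : ℝ := 2 - Real.exp u with ha_def
  have ha : 0 < a := by simp only [ha_def]; linarith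
  have hae : Real.exp u = 2 - a := by rw [ha_def]; ring
  constructor
  · rintro x ⟨v, hv, rfl⟩
    simp only [Set.mem_Ioi] at hv
    have hv1 : (0:ℝ) < v + 1 := by linarith
    have h1 : Real.log (Real.exp u * (v + 1) / (2 * v))
        ≤ Real.exp u * (v + 1) / (2 * v) - 1 :=
      Real.log_le_sub_one_of_pos (by positivity)
    have h2 : Real.log (a * (v + 1) / 2) ≤ a * (v + 1) / 2 - 1 :=
      Real.log_le_sub_one_of_pos (by positivity)
    have e1 : Real.log (Real.exp u * (v + 1) / (2 * v))
        = u + Real.log (v + 1) - Real.log 2 - Real.log v := by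
      rw [Real.log_div (by positivity) (by positivity),
        Real.log_mul (Real.exp_ne_zero u) (by positivity),
        Real.log_mul two_ne_zero (ne_of_gt hv), Real.log_exp]
      ring
    have e2 : Real.log (a * (v + 1) / 2) = Real.log a + Real.log (v + 1) - Real.log 2 := by
      rw [Real.log_div (by positivity) two_ne_zero, Real.log_mul (ne_of_gt ha) (by positivity)]
    have e3 : Real.log ((v + 1) / 2) = Real.log (v + 1) - Real.log 2 :=
      Real.log_div (by positivity) two_ne_zero
    have id1 : u * v - (v * Real.log v - (v + 1) * Real.log ((v + 1) / 2)) + Real.log a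
        = v * Real.log (Real.exp u * (v + 1) / (2 * v)) + Real.log (a * (v + 1) / 2) := by
      rw [e1, e2, e3]; ring
    have id2 : v * (Real.exp u * (v + 1) / (2 * v) - 1) + (a * (v + 1) / 2 - 1) = 0 := by
      rw [hae]; field_simp; ring
    have h1' : v * Real.log (Real.exp u * (v + 1) / (2 * v))
        ≤ v * (Real.exp u * (v + 1) / (2 * v) - 1) :=
      mul_le_mul_of_nonneg_left h1 hv.le
    simp only
    linarith [id1, id2, h1', h2]
  · intro b hb
    set v₀ : ℝ := Real.exp u / a with hv₀_def
    have hv₀ : 0 < v₀ := div_pos (Real.exp_pos u) ha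
    have hlogv : Real.log v₀ = u - Real.log a := by
      rw [hv₀_def, Real.log_div (Real.exp_ne_zero u) (ne_of_gt ha), Real.log_exp]
    have hsum : v₀ + 1 = 2 / a := by
      rw [hv₀_def, hae]; field_simp; ring
    have hlog2 : Real.log ((v₀ + 1) / 2) = -Real.log a := by
      rw [hsum]
      rw [show (2 / a) / 2 = a⁻¹ by field_simp, Real.log_inv]
    have hmem := hb ⟨v₀, Set.mem_Ioi.mpr hv₀, rfl⟩
    simp only at hmem
    rw [hlogv, hlog2] at hmem
    have : u * v₀ - (v₀ * (u - Real.log a) - (v₀ + 1) * -Real.log a) = -Real.log a := by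
      ring
    linarith [hmem, this]
end

section
/- Let P and Q be probability measures on a measurable space Ω with P ≪ Q and Radon–Nikodym derivative ρ = dP/dQ satisfying ρ > 0 Q-almost everywhere, and assume f_JS ∘ ρ is Q-integrable, where f_JS(v) = v·log v − (v + 1)·log((v + 1)/2). Then for every measurable function g : Ω → ℝ such that ω ↦ log(2/(1 + e^{−g(ω)})) is P-integrable and ω ↦ log(2/(1 + e^{g(ω)})) is Q-integrable, one has ∫ log(2/(1 + e^{−g})) dP + ∫ log(2/(1 + e^{g})) dQ ≤ ∫ f_JS(ρ) dQ. -/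
open MeasureTheory

private lemma js_pointwise (v t : ℝ) (hv : 0 < v) :
    v * Real.log (2 / (1 + Real.exp (-t))) + Real.log (2 / (1 + Real.exp t)) ≤
      v * Real.log v - (v + 1) * Real.log ((v + 1) / 2) := by
  set s : ℝ := 1 / (1 + Real.exp t) with hs
  have he : 0 < Real.exp t := Real.exp_pos t
  have hB : (0:ℝ) < 1 + Real.exp t := by linarith
  have hs0 : 0 < s := by positivity
  have hs1 : s < 1 := by
    rw [hs, div_lt_one hB]; linarith
  have h2A : 2 / (1 + Real.exp (-t)) = 2 * (1 - s) := by
    rw [hs, Real.exp_neg]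
    field_simp
    ring
  have h2B : 2 / (1 + Real.exp t) = 2 * s := by rw [hs]; ring
  rw [h2A, h2B]
  have hv1 : (0:ℝ) < v + 1 := by linarith
  have h1s : (0:ℝ) < 1 - s := by linarith
  have h1 : Real.log ((1 - s) * (v + 1) / v) ≤ (1 - s) * (v + 1) / v - 1 :=
    Real.log_le_sub_one_of_pos (by positivity)
  have h2 : Real.log (s * (v + 1)) ≤ s * (v + 1) - 1 :=
    Real.log_le_sub_one_of_pos (by positivity)
  have h1' : v * Real.log ((1 - s) * (v + 1) / v) ≤ (1 - s) * (v + 1) - v := by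
    have := mul_le_mul_of_nonneg_left h1 hv.le
    have hveq : v * ((1 - s) * (v + 1) / v - 1) = (1 - s) * (v + 1) - v := by
      field_simp
    linarith [hveq ▸ this]
  have e1 : Real.log ((1 - s) * (v + 1) / v) =
      Real.log (1 - s) + Real.log (v + 1) - Real.log v := by
    rw [Real.log_div (by positivity) hv.ne', Real.log_mul (by linarith) hv1.ne']
  have e2 : Real.log (s * (v + 1)) = Real.log s + Real.log (v + 1) := by
    rw [Real.log_mul hs0.ne' hv1.ne']
  have e3 : Real.log (2 * (1 - s)) = Real.log 2 + Real.log (1 - s) :=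
    Real.log_mul two_ne_zero (by linarith)
  have e4 : Real.log (2 * s) = Real.log 2 + Real.log s :=
    Real.log_mul two_ne_zero hs0.ne'
  have e5 : Real.log ((v + 1) / 2) = Real.log (v + 1) - Real.log 2 :=
    Real.log_div hv1.ne' two_ne_zero
  rw [e1] at h1'
  rw [e2] at h2
  rw [e3, e4, e5]
  nlinarith [h1', h2]

/-- Jensen–Shannon instantiation of the variational lower bound used by FEWL, with
witness `g*(v) = log(2/(1 + e^{−v}))` and conjugate `f*(u) = −log(2 − e^u)`
(so that `−f*(g*(v)) = log(2/(1 + e^{v}))`): for `P ≪ Q` with derivative `ρ > 0`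
Q-a.e. and any measurable `g`,
`∫ log(2/(1+e^{−g})) dP + ∫ log(2/(1+e^{g})) dQ ≤ ∫ f_JS(ρ) dQ`. -/
theorem js_variational_lower_bound
    {Ω : Type*} [MeasurableSpace Ω]
    (P Q : Measure Ω) [IsProbabilityMeasure P] [IsProbabilityMeasure Q]
    (hPQ : P ≪ Q)
    (ρ : Ω → ℝ) (hρ : ρ = fun ω => (P.rnDeriv Q ω).toReal)
    (hρ_pos : ∀ᵐ ω ∂Q, 0 < ρ ω)
    (fJS : ℝ → ℝ)
    (hfJS : fJS = fun v => v * Real.log v - (v + 1) * Real.log ((v + 1) / 2))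
    (hfρ_int : Integrable (fun ω => fJS (ρ ω)) Q)
    (g : Ω → ℝ) (hg : Measurable g)
    (hP_int : Integrable (fun ω => Real.log (2 / (1 + Real.exp (-g ω)))) P)
    (hQ_int : Integrable (fun ω => Real.log (2 / (1 + Real.exp (g ω)))) Q) :
    (∫ ω, Real.log (2 / (1 + Real.exp (-g ω))) ∂P) +
        (∫ ω, Real.log (2 / (1 + Real.exp (g ω))) ∂Q) ≤
      ∫ ω, fJS (ρ ω) ∂Q := by
  have hrw : (∫ ω, Real.log (2 / (1 + Real.exp (-g ω))) ∂P) =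
      ∫ ω, ρ ω * Real.log (2 / (1 + Real.exp (-g ω))) ∂Q := by
    rw [hρ]
    simp_rw [← smul_eq_mul]
    exact (integral_rnDeriv_smul hPQ).symm
  have hint1 : Integrable (fun ω => ρ ω * Real.log (2 / (1 + Real.exp (-g ω)))) Q := by
    rw [hρ]
    simp_rw [← smul_eq_mul]
    exact (integrable_rnDeriv_smul_iff hPQ).mpr hP_int
  rw [hrw, ← integral_add hint1 hQ_int]
  refine integral_mono_ae (hint1.add hQ_int) hfρ_int ?_
  filter_upwards [hρ_pos] with ω hω
  rw [hfJS]
  exact js_pointwise (ρ ω) (g ω) hω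
end
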